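/- Limiting ratio of successive sampling probabilities when selection is supercritical relative to sample size (equation (10c) of the paper): fix θ₁, θ₂ > 0, a natural number n₁, and β̃ > 1. For each natural number n₂, set β = β̃·n₂, and define q(m₁,n₂;β) := C(m₁+n₂,m₁) · I(m₁,n₂,β) / I(0,0,β), where C(·,·) is the binomial coefficient and I(m₁,m₂,β) := ∫₀¹ x^{θ₁+m₁-1}(1-x)^{θ₂+m₂-1} e^{βx} dx. Then lim_{n₂ → ∞} q(n₁+1,n₂;β̃n₂) / (n₂ · q(n₁,n₂;β̃n₂)) = (β̃-1) / (β̃·(n₁+1)). -/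

import Mathlib

open Real Filter Topology

open MeasureTheory Set


lemma betaInt {a b : ℝ} (ha : 0 < a) (hb : 0 < b) :
    IntervalIntegrable (fun x : ℝ => x ^ (a-1) * (1-x) ^ (b-1)) volume 0 1 := by
  have left : ∀ {u v : ℝ}, 0 < u → IntervalIntegrable
      (fun x : ℝ => x ^ (u-1) * (1-x) ^ (v-1)) volume 0 (1/2) := by
    intro u v hu
    apply IntervalIntegrable.mul_continuousOn
    · exact intervalIntegral.intervalIntegrable_rpow' (by linarith)
    · apply ContinuousOn.rpow_const
      · exact continuousOn_const.sub continuousOn_id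
      · intro x hx
        rw [Set.uIcc_of_le (by norm_num : (0:ℝ) ≤ 1/2)] at hx
        left; intro h; have := hx.2; rw [sub_eq_zero] at h; norm_num [← h] at this
  have right := ((left (v := a) hb).comp_sub_left 1).symm
  have e1 : (1:ℝ) - 1/2 = 1/2 := by norm_num
  have e2 : (1:ℝ) - 0 = 1 := by norm_num
  rw [e1, e2] at right
  have right' : IntervalIntegrable (fun x : ℝ => x ^ (a-1) * (1-x) ^ (b-1)) volume (1/2) 1 := by
    refine right.congr (fun x _ => ?_)
    simp only [sub_sub_cancel]
    exact mul_comm _ _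
  exact (left ha).trans right'

lemma phi_lt {β : ℝ} (hβ : 1 < β) {x : ℝ} (hx : x ≠ (β-1)/β) :
    (1-x) * Real.exp (β*x) < (1-(β-1)/β) * Real.exp (β*((β-1)/β)) := by
  have hβ0 : (0:ℝ) < β := by linarith
  set u : ℝ := β * x - (β - 1) with hu
  have hu0 : u ≠ 0 := by
    intro h
    apply hx
    have : β * x = β - 1 := by rw [hu] at h; linarith
    field_simp
    linarith
  have h1 : 1 - u < Real.exp (-u) := by
    have := Real.add_one_lt_exp (neg_ne_zero.mpr hu0)
    linarith
  have h2 : (1 - u) * Real.exp u < 1 := by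
    have hE : (0:ℝ) < Real.exp u := Real.exp_pos u
    have := mul_lt_mul_of_pos_right h1 hE
    rwa [← Real.exp_add, neg_add_cancel, Real.exp_zero] at this
  have e1 : 1 - (β-1)/β = 1/β := by field_simp; ring
  have e2 : β * ((β-1)/β) = β - 1 := by field_simp
  have e3 : (1 - x) = (1 - u) / β := by rw [hu]; field_simp; ring
  have e4 : Real.exp (β*x) = Real.exp u * Real.exp (β-1) := by
    rw [← Real.exp_add]; congr 1; rw [hu]; ring
  rw [e1, e2, e3, e4]
  have hC : (0:ℝ) < 1/β * Real.exp (β-1) := by positivity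
  calc (1-u)/β * (Real.exp u * Real.exp (β-1)) = ((1-u) * Real.exp u) * (1/β * Real.exp (β-1)) := by ring
    _ < 1 * (1/β * Real.exp (β-1)) := by exact mul_lt_mul_of_pos_right h2 hC
    _ = 1/β * Real.exp (β-1) := one_mul _

lemma eqInt (θ₂ β c : ℝ) (n : ℕ) :
    (∫ x in (0:ℝ)..1, x ^ c * (1-x) ^ (θ₂ + n - 1) * Real.exp (β * n * x))
      = ∫ x in Set.Ioo (0:ℝ) 1, x ^ c * ((1-x) ^ (θ₂-1) * ((1-x) * Real.exp (β*x)) ^ n) := by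
  rw [intervalIntegral.integral_of_le zero_le_one, integral_Ioc_eq_integral_Ioo]
  refine setIntegral_congr_fun measurableSet_Ioo fun x hx => ?_
  have h1 : (0:ℝ) < 1 - x := by linarith [hx.2]
  have e1 : (1-x) ^ (θ₂+(n:ℝ)-1) = (1-x) ^ (θ₂-1) * (1-x) ^ n := by
    rw [show θ₂+(n:ℝ)-1 = (θ₂-1)+(n:ℝ) by ring, Real.rpow_add h1, Real.rpow_natCast]
  have e2 : Real.exp (β*n*x) = Real.exp (β*x) ^ n := by
    rw [← Real.exp_nat_mul]; congr 1; ring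
  rw [e1, e2, mul_pow]; ring

lemma core {a b β : ℝ} (ha : 0 < a) (hb : 0 < b) (hβ : 1 < β) :
    Tendsto (fun n : ℕ =>
      (∫ x in Set.Ioo (0:ℝ) 1, x * (x ^ (a-1) * ((1-x) ^ (b-1) * ((1-x) * Real.exp (β*x)) ^ n))) /
      (∫ x in Set.Ioo (0:ℝ) 1, x ^ (a-1) * ((1-x) ^ (b-1) * ((1-x) * Real.exp (β*x)) ^ n)))
      atTop (𝓝 ((β-1)/β)) := by
  have hβ0 : (0:ℝ) < β := by linarith
  set xs : ℝ := (β-1)/β with hxs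
  have hxs0 : 0 < xs := div_pos (by linarith) hβ0
  have hxs1 : xs < 1 := by rw [hxs, div_lt_one hβ0]; linarith
  set φ : ℝ → ℝ := fun x => (1-x) * Real.exp (β*x) with hφ
  have hφc : Continuous φ := by fun_prop
  set h : ℝ → ℝ := fun x => x ^ (a-1) * (1-x) ^ (b-1) with hh
  set w : ℕ → ℝ → ℝ := fun n x => h x * φ x ^ n with hw
  -- basic positivity of h, φ on (0,1)
  have hhpos : ∀ x ∈ Set.Ioo (0:ℝ) 1, 0 < h x := fun x hx =>
    mul_pos (Real.rpow_pos_of_pos hx.1 _) (Real.rpow_pos_of_pos (by linarith [hx.2]) _)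
  have hφpos : ∀ x ∈ Set.Ioo (0:ℝ) 1, 0 < φ x := fun x hx =>
    mul_pos (by linarith [hx.2]) (Real.exp_pos _)
  have hwpos : ∀ n, ∀ x ∈ Set.Ioo (0:ℝ) 1, 0 < w n x := fun n x hx =>
    mul_pos (hhpos x hx) (pow_pos (hφpos x hx) n)
  have hφxs : 0 < φ xs := hφpos xs ⟨hxs0, hxs1⟩
  have hφle : ∀ x, φ x ≤ φ xs := by
    intro x
    rcases eq_or_ne x xs with rfl | hx
    · exact le_refl _
    · exact (phi_lt hβ hx).le
  -- integrability
  have hHint : IntegrableOn h (Set.Ioo (0:ℝ) 1) := by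
    have := (betaInt ha hb).1
    exact this.mono_set Set.Ioo_subset_Ioc_self
  have hWiv : ∀ n : ℕ, IntervalIntegrable (fun x => h x * φ x ^ n) volume 0 1 := by
    intro n
    exact (betaInt ha hb).mul_continuousOn (hφc.pow n).continuousOn
  have hWint : ∀ n, IntegrableOn (w n) (Set.Ioo (0:ℝ) 1) :=
    fun n => ((hWiv n).1).mono_set Set.Ioo_subset_Ioc_self
  have hXWint : ∀ n, IntegrableOn (fun x => x * w n x) (Set.Ioo (0:ℝ) 1) := by
    intro n
    refine (hWint n).mono' (continuous_id.aestronglyMeasurable.mul (hWint n).1) ?_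
    rw [ae_restrict_iff' measurableSet_Ioo]
    refine Filter.Eventually.of_forall fun x hx => ?_
    have := (hwpos n x hx).le
    rw [norm_mul, Real.norm_eq_abs, Real.norm_eq_abs, abs_of_nonneg hx.1.le, abs_of_nonneg this]
    nlinarith [hx.2]
  have hSWint : ∀ n, IntegrableOn (fun x => (x - xs) * w n x) (Set.Ioo (0:ℝ) 1) := by
    intro n
    refine (hWint n).mono' ((continuous_id.sub continuous_const).aestronglyMeasurable.mul
      (hWint n).1) ?_
    rw [ae_restrict_iff' measurableSet_Ioo]
    refine Filter.Eventually.of_forall fun x hx => ?_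
    have hwn := (hwpos n x hx).le
    rw [norm_mul, Real.norm_eq_abs, Real.norm_eq_abs, abs_of_nonneg hwn]
    have : |x - xs| ≤ 1 := by
      rw [abs_le]; constructor <;> [linarith [hx.1]; linarith [hx.2]]
    nlinarith
  set A : ℕ → ℝ := fun n => ∫ x in Set.Ioo (0:ℝ) 1, x * w n x with hA
  set D : ℕ → ℝ := fun n => ∫ x in Set.Ioo (0:ℝ) 1, w n x with hD
  have hEq : (fun n : ℕ =>
      (∫ x in Set.Ioo (0:ℝ) 1, x * (x ^ (a-1) * ((1-x) ^ (b-1) * ((1-x) * Real.exp (β*x)) ^ n))) /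
      (∫ x in Set.Ioo (0:ℝ) 1, x ^ (a-1) * ((1-x) ^ (b-1) * ((1-x) * Real.exp (β*x)) ^ n)))
      = fun n => A n / D n := by
    funext n
    congr 1
    · exact setIntegral_congr_fun measurableSet_Ioo fun x _ => by
        simp only [hw, hh]; ring
    · exact setIntegral_congr_fun measurableSet_Ioo fun x _ => by
        simp only [hw, hh]; ring
  rw [hEq, Metric.tendsto_atTop]
  intro ε hε
  set δ : ℝ := min (ε/2) (min (xs/2) ((1-xs)/2)) with hδ
  have hδ0 : 0 < δ := lt_min (by linarith) (lt_min (by linarith) (by linarith))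
  have hδε : δ ≤ ε/2 := min_le_left _ _
  have hδxs : δ ≤ xs/2 := le_trans (min_le_right _ _) (min_le_left _ _)
  have hδ1xs : δ ≤ (1-xs)/2 := le_trans (min_le_right _ _) (min_le_right _ _)
  set K : Set ℝ := Set.Icc 0 1 ∩ {x | δ ≤ |x - xs|} with hK
  have hKc : IsCompact K := isCompact_Icc.inter_right
    (isClosed_le continuous_const ((continuous_id.sub continuous_const).abs))
  have hKne : K.Nonempty := ⟨0, ⟨le_refl 0, zero_le_one⟩, by
    simp only [Set.mem_setOf_eq, zero_sub, abs_neg, abs_of_nonneg hxs0.le]; linarith⟩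
  obtain ⟨z, hzK, hz⟩ := hKc.exists_isMaxOn hKne hφc.continuousOn
  set M : ℝ := φ z with hM
  have hzne : z ≠ xs := by
    intro hzx
    have h2 := hzK.2
    rw [Set.mem_setOf_eq, hzx, sub_self, abs_zero] at h2
    linarith
  have hMlt : M < φ xs := phi_lt hβ hzne
  have hM0 : 0 ≤ M := mul_nonneg (by linarith [hzK.1.2]) (Real.exp_pos _).le
  set r : ℝ := (M + φ xs)/2 with hr
  have hMr : M < r := by rw [hr]; linarith
  have hrφ : r < φ xs := by rw [hr]; linarith
  have hr0 : 0 < r := by rw [hr]; linarith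
  have hopen : IsOpen {x : ℝ | r < φ x} := isOpen_lt continuous_const hφc
  obtain ⟨ρ, hρ0, hball⟩ := Metric.isOpen_iff.1 hopen xs hrφ
  set δ' : ℝ := min δ (ρ/2) with hδ'
  have hδ'0 : 0 < δ' := lt_min hδ0 (by linarith)
  have hδ'δ : δ' ≤ δ := min_le_left _ _
  have hδ'ρ : δ' ≤ ρ/2 := min_le_right _ _
  have hIccsub : Set.Icc (xs-δ') (xs+δ') ⊆ {x : ℝ | r < φ x} := by
    intro y hy
    apply hball
    rw [Metric.mem_ball, Real.dist_eq]
    have : |y - xs| ≤ δ' := abs_le.2 ⟨by linarith [hy.1], by linarith [hy.2]⟩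
    linarith
  have hsub01 : Set.Icc (xs-δ') (xs+δ') ⊆ Set.Ioo (0:ℝ) 1 := by
    intro y hy
    exact ⟨by linarith [hy.1], by linarith [hy.2]⟩
  set c : ℝ := ∫ x in Set.Icc (xs-δ') (xs+δ'), h x with hc
  have hab : xs - δ' ≤ xs + δ' := by linarith
  have hcint : IntegrableOn h (Set.Icc (xs-δ') (xs+δ')) := hHint.mono_set hsub01
  have hc0 : 0 < c := by
    rw [hc, integral_Icc_eq_integral_Ioc, ← intervalIntegral.integral_of_le hab]
    apply intervalIntegral.intervalIntegral_pos_of_pos_on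
    · exact (intervalIntegrable_iff_integrableOn_Ioc_of_le hab).2
        (hcint.mono_set Set.Ioc_subset_Icc_self)
    · exact fun x hx => hhpos x (hsub01 (Set.Ioo_subset_Icc_self hx))
    · linarith
  have hDlb : ∀ n, r^n * c ≤ D n := by
    intro n
    have s2 : ∫ x in Set.Icc (xs-δ') (xs+δ'), r^n * h x
        ≤ ∫ x in Set.Icc (xs-δ') (xs+δ'), w n x := by
      apply setIntegral_mono_on (hcint.const_mul _) ((hWint n).mono_set hsub01)
        measurableSet_Icc
      intro x hx
      have hrx : r ≤ φ x := (hIccsub hx).le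
      have hpw : r^n ≤ φ x ^ n := pow_le_pow_left₀ hr0.le hrx n
      have hhx := (hhpos x (hsub01 hx)).le
      have l2 : h x * r^n ≤ h x * φ x ^ n := mul_le_mul_of_nonneg_left hpw hhx
      simp only [hw]
      linarith [mul_comm (h x) (r^n)]
    have s1 : ∫ x in Set.Icc (xs-δ') (xs+δ'), w n x ≤ D n := by
      apply setIntegral_mono_set (hWint n)
      · rw [EventuallyLE, ae_restrict_iff' measurableSet_Ioo]
        exact Filter.Eventually.of_forall fun x hx => (hwpos n x hx).le
      · exact HasSubset.Subset.eventuallyLE hsub01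
    calc r^n * c = ∫ x in Set.Icc (xs-δ') (xs+δ'), r^n * h x := by
          rw [hc, integral_const_mul]
      _ ≤ D n := le_trans s2 s1
  have hD0 : ∀ n, 0 < D n := fun n => lt_of_lt_of_le (by positivity) (hDlb n)
  set Hb : ℝ := ∫ x in Set.Ioo (0:ℝ) 1, h x with hHb
  have hHb0 : 0 ≤ Hb := setIntegral_nonneg measurableSet_Ioo fun x hx => (hhpos x hx).le
  have hNbd : ∀ n, |∫ x in Set.Ioo (0:ℝ) 1, (x - xs) * w n x| ≤ δ * D n + M^n * Hb := by
    intro n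
    have step1 : |∫ x in Set.Ioo (0:ℝ) 1, (x - xs) * w n x|
        ≤ ∫ x in Set.Ioo (0:ℝ) 1, |x - xs| * |w n x| := by
      simpa [Real.norm_eq_abs, abs_mul] using
        norm_integral_le_integral_norm (μ := volume.restrict (Set.Ioo (0:ℝ) 1))
          (fun x => (x - xs) * w n x)
    have step2 : ∫ x in Set.Ioo (0:ℝ) 1, |x - xs| * |w n x|
        ≤ ∫ x in Set.Ioo (0:ℝ) 1, (δ * w n x + M^n * h x) := by
      have hi1 := (hSWint n).abs
      simp only [abs_mul] at hi1
      apply setIntegral_mono_on hi1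
        (((hWint n).const_mul δ).add (hHint.const_mul _)) measurableSet_Ioo
      intro x hx
      have hwn := (hwpos n x hx).le
      have hhn := (hhpos x hx).le
      have hMn : (0:ℝ) ≤ M^n := pow_nonneg hM0 n
      rw [abs_of_nonneg hwn]
      simp only [Pi.add_apply]
      rcases le_or_gt |x - xs| δ with hcase | hcase
      · have l1 : |x - xs| * w n x ≤ δ * w n x := mul_le_mul_of_nonneg_right hcase hwn
        linarith [mul_nonneg hMn hhn]
      · have hxK : x ∈ K := ⟨⟨hx.1.le, hx.2.le⟩, hcase.le⟩
        have hφM : φ x ≤ M := hz hxK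
        have hwM : w n x ≤ M^n * h x := by
          have hpw : φ x ^ n ≤ M ^ n := pow_le_pow_left₀ (hφpos x hx).le hφM n
          have l2 : h x * φ x ^ n ≤ h x * M ^ n := mul_le_mul_of_nonneg_left hpw hhn
          simp only [hw]
          linarith [mul_comm (h x) (M^n)]
        have habs1 : |x - xs| ≤ 1 := abs_le.2 ⟨by linarith [hx.1], by linarith [hx.2]⟩
        have l3 : |x - xs| * w n x ≤ 1 * (M^n * h x) :=
          mul_le_mul habs1 hwM hwn zero_le_one
        linarith [mul_nonneg hδ0.le hwn]
    have step3 : ∫ x in Set.Ioo (0:ℝ) 1, (δ * w n x + M^n * h x) = δ * D n + M^n * Hb := by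
      rw [integral_add ((hWint n).const_mul δ) (hHint.const_mul _),
        integral_const_mul, integral_const_mul]
    linarith
  have hId : ∀ n, A n / D n - xs
      = (∫ x in Set.Ioo (0:ℝ) 1, (x - xs) * w n x) / D n := by
    intro n
    have hN : ∫ x in Set.Ioo (0:ℝ) 1, (x - xs) * w n x = A n - xs * D n := by
      simp only [hA, hD]
      rw [← integral_const_mul, ← integral_sub (hXWint n) ((hWint n).const_mul xs)]
      exact setIntegral_congr_fun measurableSet_Ioo fun x _ => by ring
    rw [hN, sub_div, mul_div_assoc, div_self (hD0 n).ne', mul_one]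
  have hbound : ∀ n, |A n / D n - xs| ≤ δ + (M/r)^n * (Hb/c) := by
    intro n
    rw [hId n, abs_div, abs_of_pos (hD0 n)]
    have t1 : |∫ x in Set.Ioo (0:ℝ) 1, (x - xs) * w n x| / D n
        ≤ (δ * D n + M^n * Hb) / D n :=
      (div_le_div_iff_of_pos_right (hD0 n)).2 (hNbd n)
    have t2 : (δ * D n + M^n * Hb) / D n = δ + M^n * Hb / D n := by
      rw [add_div, mul_div_assoc, div_self (hD0 n).ne', mul_one]
    have t3 : M^n * Hb / D n ≤ M^n * Hb / (r^n * c) :=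
      div_le_div_of_nonneg_left (mul_nonneg (pow_nonneg hM0 n) hHb0)
        (by positivity) (hDlb n)
    have t4 : M^n * Hb / (r^n * c) = (M/r)^n * (Hb/c) := by
      rw [← div_mul_div_comm, ← div_pow]
    linarith [t1, t2 ▸ t1, t3]
  have htail : Tendsto (fun n : ℕ => (M/r)^n * (Hb/c)) atTop (𝓝 0) := by
    have h0 := tendsto_pow_atTop_nhds_zero_of_lt_one (div_nonneg hM0 hr0.le)
      ((div_lt_one hr0).2 hMr)
    simpa using h0.mul_const (Hb/c)
  obtain ⟨N₀, hN₀⟩ := (Metric.tendsto_atTop.1 htail) (ε/2) (by linarith)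
  refine ⟨N₀, fun n hn => ?_⟩
  have h1 := hbound n
  have h2 := hN₀ n hn
  rw [Real.dist_eq, sub_zero] at h2
  have h3 : (M/r)^n * (Hb/c) < ε/2 := lt_of_abs_lt h2
  rw [Real.dist_eq]
  calc |A n / D n - xs| ≤ δ + (M/r)^n * (Hb/c) := h1
    _ < ε/2 + ε/2 := by linarith
    _ = ε := by ring

lemma Ipos (u v γ : ℝ) (hu : 0 < u) (hv : 0 < v) :
    0 < ∫ x in (0:ℝ)..1, x ^ (u-1) * (1-x) ^ (v-1) * Real.exp (γ*x) := by
  apply intervalIntegral.intervalIntegral_pos_of_pos_on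
  · exact (betaInt hu hv).mul_continuousOn
      (Continuous.continuousOn (by fun_prop : Continuous fun x : ℝ => Real.exp (γ*x)))
  · intro x hx
    exact mul_pos (mul_pos (Real.rpow_pos_of_pos hx.1 _)
      (Real.rpow_pos_of_pos (by linarith [hx.2]) _)) (Real.exp_pos _)
  · norm_num

/-- Limiting ratio of successive sampling probabilities when selection is
supercritical relative to sample size (eq. (10c)): with `β = β̃·n₂`, `β̃ > 1`,
and `q(m₁,n₂;β) = C(m₁+n₂,m₁)·I(m₁,n₂,β)/I(0,0,β)` where
`I(m₁,m₂,β) = ∫₀¹ x^{θ₁+m₁-1}(1-x)^{θ₂+m₂-1}e^{βx} dx`,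
one has `lim_{n₂→∞} q(n₁+1,n₂;β̃n₂)/(n₂·q(n₁,n₂;β̃n₂)) = (β̃-1)/(β̃(n₁+1))`. -/
theorem sampling_prob_ratio_supercritical (θ₁ θ₂ βt : ℝ)
    (hθ₁ : 0 < θ₁) (hθ₂ : 0 < θ₂) (hβ : 1 < βt) (n₁ : ℕ) :
    Filter.Tendsto (fun n₂ : ℕ =>
        ((Nat.choose ((n₁ + 1) + n₂) (n₁ + 1) : ℝ) *
          (∫ x in (0:ℝ)..1,
            x ^ (θ₁ + (n₁ + 1 : ℕ) - 1) * (1 - x) ^ (θ₂ + n₂ - 1) * Real.exp (βt * n₂ * x)) /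
          (∫ x in (0:ℝ)..1, x ^ (θ₁ - 1) * (1 - x) ^ (θ₂ - 1) * Real.exp (βt * n₂ * x))) /
        ((n₂ : ℝ) * ((Nat.choose (n₁ + n₂) n₁ : ℝ) *
          (∫ x in (0:ℝ)..1,
            x ^ (θ₁ + n₁ - 1) * (1 - x) ^ (θ₂ + n₂ - 1) * Real.exp (βt * n₂ * x)) /
          (∫ x in (0:ℝ)..1, x ^ (θ₁ - 1) * (1 - x) ^ (θ₂ - 1) * Real.exp (βt * n₂ * x)))))
      Filter.atTop
      (𝓝 ((βt - 1) / (βt * (n₁ + 1)))) := by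
  have hβ0 : (0:ℝ) < βt := by linarith
  have ha : (0:ℝ) < θ₁ + n₁ := by positivity
  set a : ℝ := θ₁ + n₁ with ha2
  set A : ℕ → ℝ := fun n => ∫ x in Set.Ioo (0:ℝ) 1,
    x * (x ^ (a-1) * ((1-x) ^ (θ₂-1) * ((1-x) * Real.exp (βt*x)) ^ n)) with hA
  set B : ℕ → ℝ := fun n => ∫ x in Set.Ioo (0:ℝ) 1,
    x ^ (a-1) * ((1-x) ^ (θ₂-1) * ((1-x) * Real.exp (βt*x)) ^ n) with hB
  have hcast : θ₁ + ((n₁+1:ℕ):ℝ) - 1 = a := by push_cast; ring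
  -- rewriting of the interval integrals
  have hA' : ∀ n : ℕ, (∫ x in (0:ℝ)..1,
      x ^ (θ₁ + ((n₁+1:ℕ):ℝ) - 1) * (1 - x) ^ (θ₂ + n - 1) * Real.exp (βt * n * x)) = A n := by
    intro n
    rw [hcast, eqInt θ₂ βt a n]
    refine setIntegral_congr_fun measurableSet_Ioo fun x hx => ?_
    rw [show a = (a-1)+1 by ring, Real.rpow_add hx.1, Real.rpow_one]
    ring
  have hB' : ∀ n : ℕ, (∫ x in (0:ℝ)..1,
      x ^ (a - 1) * (1 - x) ^ (θ₂ + n - 1) * Real.exp (βt * n * x)) = B n := by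
    intro n
    rw [eqInt θ₂ βt (a-1) n]
  -- positivity facts
  have hDpos : ∀ n : ℕ, 0 < ∫ x in (0:ℝ)..1,
      x ^ (θ₁ - 1) * (1 - x) ^ (θ₂ - 1) * Real.exp (βt * n * x) :=
    fun n => Ipos θ₁ θ₂ (βt*n) hθ₁ hθ₂
  have hBpos : ∀ n : ℕ, 0 < B n := by
    intro n
    rw [← hB' n]
    exact Ipos a (θ₂ + n) (βt*n) ha (by positivity)
  -- the limit of the cleaned-up expression
  have hcore := core (a := a) (b := θ₂) (β := βt) ha hθ₂ hβ
  have h1 : Tendsto (fun n : ℕ => ((n₁:ℝ)+1)/n + 1) atTop (𝓝 1) := by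
    have h0 := tendsto_const_div_atTop_nhds_zero_nat ((n₁:ℝ)+1)
    have := h0.add_const 1
    simpa using this
  have hT : Tendsto (fun n : ℕ => 1/((n₁:ℝ)+1) * (((n₁:ℝ)+1)/n + 1) * (A n / B n))
      atTop (𝓝 ((βt - 1) / (βt * (n₁ + 1)))) := by
    have := ((h1.const_mul (1/((n₁:ℝ)+1))).mul hcore)
    have hval : 1/((n₁:ℝ)+1) * 1 * ((βt-1)/βt) = (βt - 1) / (βt * ((n₁:ℝ) + 1)) := by
      have : ((n₁:ℝ)+1) ≠ 0 := by positivity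
      field_simp
    rw [hval] at this
    exact this
  -- eventual equality
  refine hT.congr' ?_
  filter_upwards [eventually_ge_atTop 1] with n hn
  have hn0 : (0:ℝ) < n := by exact_mod_cast hn
  have hC2pos : (0:ℝ) < (Nat.choose (n₁ + n) n₁ : ℝ) := by
    exact_mod_cast Nat.choose_pos (Nat.le_add_right _ _)
  have hCid : ((n₁:ℝ)+1) * (Nat.choose ((n₁+1) + n) (n₁+1) : ℝ)
      = ((n₁:ℝ)+1+n) * (Nat.choose (n₁ + n) n₁ : ℝ) := by
    have h := Nat.add_one_mul_choose_eq (n₁+n) n₁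
    have h3 := congrArg (fun k : ℕ => (k:ℝ)) h
    push_cast [Nat.succ_eq_add_one] at h3
    rw [show (n₁+1) + n = (n₁+n)+1 from by omega]
    push_cast
    linear_combination -h3
  rw [hA' n, hB' n]
  have hDne := (hDpos n).ne'
  have hBne := (hBpos n).ne'
  have hC2ne := hC2pos.ne'
  have hnne := hn0.ne'
  have hn₁ne : ((n₁:ℝ)+1) ≠ 0 := by positivity
  have hC1eq : (Nat.choose ((n₁+1) + n) (n₁+1) : ℝ)
      = (((n₁:ℝ)+1+n) * (Nat.choose (n₁ + n) n₁ : ℝ)) / ((n₁:ℝ)+1) := by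
    rw [eq_div_iff hn₁ne]
    linear_combination hCid
  rw [hC1eq]
  set Dn := ∫ x in (0:ℝ)..1, x ^ (θ₁ - 1) * (1 - x) ^ (θ₂ - 1) * Real.exp (βt * n * x) with hDn
  field_simp
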